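/- For any Boolean function f computed by a hypergraph program H (arbitrary degree) of size m, there is a nondeterministic Boolean circuit C(x, y) of size polynomial in m computing f: the advice variables y correspond to hyperedges, and C(α, β) = 1 iff the set {e : β(e) = 1} is an independent set of hyperedges of H covering all vertices whose labels evaluate to 0 under α; consequently, for every α, f(α) = 1 iff there exists β with C(α, β) = 1. Moreover, if H is monotone then C can be chosen monotone (negations applied only to advice variables y). -/

import Mathlib

inductive HGPLabel (α : Type) : Type
  | zero : HGPLabel α
  | one : HGPLabel α
  | pos (p : α) : HGPLabel α
  | neg (p : α) : HGPLabel α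

def HGPLabel.eval {α : Type} (σ : α → Bool) : HGPLabel α → Bool
  | .zero => false
  | .one => true
  | .pos p => σ p
  | .neg p => !σ p

/-- Gates of a Boolean circuit over inputs `ι`. -/
inductive BGate (ι : Type) : Type
  | var (p : ι) : BGate ι
  | const (b : Bool) : BGate ι
  | not (i : ℕ) : BGate ι
  | and (i j : ℕ) : BGate ι
  | or (i j : ℕ) : BGate ι

/-- A Boolean circuit: `m` gates (wires only from smaller to larger indices)
and a designated output gate. -/
structure BCircuit (ι : Type) where
  m : ℕ
  gate : ℕ → BGate ι
  out : ℕ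

/-- The value of gate `k` under input `σ` (references not to strictly earlier
gates, or out of range, evaluate to `false`). -/
def BCircuit.evalAux {ι : Type} (C : BCircuit ι) (σ : ι → Bool) (k : ℕ) : Bool :=
  if k < C.m then
    match C.gate k with
    | .var p => σ p
    | .const b => b
    | .not i => if _ : i < k then !(C.evalAux σ i) else false
    | .and i j =>
        (if _ : i < k then C.evalAux σ i else false) &&
        (if _ : j < k then C.evalAux σ j else false)
    | .or i j =>
        (if _ : i < k then C.evalAux σ i else false) ||
        (if _ : j < k then C.evalAux σ j else false)
  else false
termination_by k

def BCircuit.eval {ι : Type} (C : BCircuit ι) (σ : ι → Bool) : Bool :=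
  C.evalAux σ C.out

variable {ι : Type} (C : BCircuit ι) (σ : ι → Bool)

lemma BCircuit.evalAux_var {k : ℕ} {p : ι} (hk : k < C.m) (hg : C.gate k = .var p) :
    C.evalAux σ k = σ p := by
  rw [BCircuit.evalAux, if_pos hk, hg]

lemma BCircuit.evalAux_const {k : ℕ} {b : Bool} (hk : k < C.m) (hg : C.gate k = .const b) :
    C.evalAux σ k = b := by
  rw [BCircuit.evalAux, if_pos hk, hg]

lemma BCircuit.evalAux_not {k i : ℕ} (hk : k < C.m) (hg : C.gate k = .not i) (hik : i < k) :
    C.evalAux σ k = !(C.evalAux σ i) := by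
  rw [BCircuit.evalAux, if_pos hk, hg]
  simp [hik]

lemma BCircuit.evalAux_and {k i j : ℕ} (hk : k < C.m) (hg : C.gate k = .and i j)
    (hik : i < k) (hjk : j < k) :
    C.evalAux σ k = (C.evalAux σ i && C.evalAux σ j) := by
  rw [BCircuit.evalAux, if_pos hk, hg]
  simp [hik, hjk]

lemma BCircuit.evalAux_or {k i j : ℕ} (hk : k < C.m) (hg : C.gate k = .or i j)
    (hik : i < k) (hjk : j < k) :
    C.evalAux σ k = (C.evalAux σ i || C.evalAux σ j) := by
  rw [BCircuit.evalAux, if_pos hk, hg]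
  simp [hik, hjk]

namespace HGP19

inductive BExpr (ι : Type) : Type
  | var (p : ι)
  | const (b : Bool)
  | not (e : BExpr ι)
  | and (e f : BExpr ι)
  | or (e f : BExpr ι)

variable {ι : Type}

def BExpr.eval (σ : ι → Bool) : BExpr ι → Bool
  | .var p => σ p
  | .const b => b
  | .not e => !(e.eval σ)
  | .and e f => e.eval σ && f.eval σ
  | .or e f => e.eval σ || f.eval σ

def BExpr.sz : BExpr ι → ℕ
  | .var _ => 1
  | .const _ => 1
  | .not e => e.sz + 1
  | .and e f => e.sz + f.sz + 1
  | .or e f => e.sz + f.sz + 1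

lemma BExpr.one_le_sz (e : BExpr ι) : 1 ≤ e.sz := by
  cases e <;> simp [sz]

def BExpr.compileAt : BExpr ι → ℕ → List (BGate ι)
  | .var p, _ => [.var p]
  | .const b, _ => [.const b]
  | .not e, n => e.compileAt n ++ [.not (n + e.sz - 1)]
  | .and e f, n => e.compileAt n ++ f.compileAt (n + e.sz) ++
      [.and (n + e.sz - 1) (n + e.sz + f.sz - 1)]
  | .or e f, n => e.compileAt n ++ f.compileAt (n + e.sz) ++
      [.or (n + e.sz - 1) (n + e.sz + f.sz - 1)]

lemma BExpr.length_compileAt (e : BExpr ι) (n : ℕ) :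
    (e.compileAt n).length = e.sz := by
  induction e generalizing n <;> simp [compileAt, sz, *] <;> omega

lemma BExpr.evalAux_correct (C : BCircuit ι) (σ : ι → Bool) :
    ∀ (e : BExpr ι) (n : ℕ),
      (∀ j, j < e.sz → C.gate (n + j) = (e.compileAt n).getD j (.const false)) →
      n + e.sz ≤ C.m → C.evalAux σ (n + e.sz - 1) = e.eval σ := by
  intro e
  induction e with
  | var p =>
      intro n h hm
      have h0 := h 0 (by simp [sz])
      simp only [compileAt, List.getD] at h0
      simp only [sz] at hm ⊢
      simp only [Nat.add_sub_cancel]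
      rw [C.evalAux_var σ (by omega) (by simpa using h0)]
      rfl
  | const b =>
      intro n h hm
      have h0 := h 0 (by simp [sz])
      simp only [sz] at hm ⊢
      simp only [Nat.add_sub_cancel]
      rw [C.evalAux_const σ (by omega) (by simpa [compileAt] using h0)]
      rfl
  | not e ih =>
      intro n h hm
      have hsz := e.one_le_sz
      simp only [sz] at hm ⊢
      have htop := h e.sz (by simp [sz])
      rw [compileAt, List.getD_append_right _ _ _ _ (by rw [length_compileAt])] at htop
      simp [length_compileAt] at htop
      rw [show n + (e.sz + 1) - 1 = n + e.sz by omega]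
      rw [C.evalAux_not σ (by omega) htop (by omega)]
      have := ih n (fun j hj => by
        have := h j (by simp [sz]; omega)
        rwa [compileAt, List.getD_append _ _ _ _ (by rw [length_compileAt]; omega)] at this)
        (by omega)
      rw [this]; rfl
  | and e f ihe ihf =>
      intro n h hm
      have hsze := e.one_le_sz
      have hszf := f.one_le_sz
      simp only [sz] at hm ⊢
      have htop := h (e.sz + f.sz) (by simp [sz])
      rw [compileAt, List.getD_append_right _ _ _ _ (by simp [length_compileAt])] at htop
      simp [length_compileAt] at htop
      rw [show n + (e.sz + f.sz + 1) - 1 = n + (e.sz + f.sz) by omega]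
      rw [C.evalAux_and σ (by omega) htop (by omega) (by omega)]
      have he := ihe n (fun j hj => by
        have := h j (by simp [sz]; omega)
        rwa [compileAt, List.getD_append _ _ _ _ (by simp [length_compileAt]; omega),
             List.getD_append _ _ _ _ (by rw [length_compileAt]; omega)] at this)
        (by omega)
      have hf := ihf (n + e.sz) (fun j hj => by
        have h2 := h (e.sz + j) (by simp [sz]; omega)
        rw [compileAt, List.getD_append _ _ _ _ (by simp [length_compileAt]; omega),
            List.getD_append_right _ _ _ _ (by rw [length_compileAt]; omega)] at h2
        rw [show n + (e.sz + j) = n + e.sz + j by omega] at h2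
        rwa [length_compileAt, show e.sz + j - e.sz = j by omega] at h2)
        (by omega)
      rw [he, hf]; rfl
  | or e f ihe ihf =>
      intro n h hm
      have hsze := e.one_le_sz
      have hszf := f.one_le_sz
      simp only [sz] at hm ⊢
      have htop := h (e.sz + f.sz) (by simp [sz])
      rw [compileAt, List.getD_append_right _ _ _ _ (by simp [length_compileAt])] at htop
      simp [length_compileAt] at htop
      rw [show n + (e.sz + f.sz + 1) - 1 = n + (e.sz + f.sz) by omega]
      rw [C.evalAux_or σ (by omega) htop (by omega) (by omega)]
      have he := ihe n (fun j hj => by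
        have := h j (by simp [sz]; omega)
        rwa [compileAt, List.getD_append _ _ _ _ (by simp [length_compileAt]; omega),
             List.getD_append _ _ _ _ (by rw [length_compileAt]; omega)] at this)
        (by omega)
      have hf := ihf (n + e.sz) (fun j hj => by
        have h2 := h (e.sz + j) (by simp [sz]; omega)
        rw [compileAt, List.getD_append _ _ _ _ (by simp [length_compileAt]; omega),
            List.getD_append_right _ _ _ _ (by rw [length_compileAt]; omega)] at h2
        rw [show n + (e.sz + j) = n + e.sz + j by omega] at h2
        rwa [length_compileAt, show e.sz + j - e.sz = j by omega] at h2)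
        (by omega)
      rw [he, hf]; rfl

def BExpr.toCircuit (e : BExpr ι) : BCircuit ι :=
  ⟨e.sz, fun k => (e.compileAt 0).getD k (.const false), e.sz - 1⟩

lemma BExpr.toCircuit_eval (e : BExpr ι) (σ : ι → Bool) :
    e.toCircuit.eval σ = e.eval σ := by
  have := evalAux_correct e.toCircuit σ e 0 (fun j hj => by simp [toCircuit]) (by simp [toCircuit])
  simpa [BCircuit.eval, toCircuit] using this


/-- Every `not` in the expression is applied directly to a variable satisfying `P`. -/
def BExpr.Good (P : ι → Prop) : BExpr ι → Prop
  | .var _ => True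
  | .const _ => True
  | .not e => ∃ p, e = .var p ∧ P p
  | .and e f => e.Good P ∧ f.Good P
  | .or e f => e.Good P ∧ f.Good P

lemma BExpr.compile_good (P : ι → Prop) :
    ∀ (e : BExpr ι), e.Good P → ∀ (n j i : ℕ), j < e.sz →
      (e.compileAt n).getD j (.const false) = .not i →
      n ≤ i ∧ i < n + e.sz ∧
        ∃ p, (e.compileAt n).getD (i - n) (.const false) = .var p ∧ P p := by
  intro e
  induction e with
  | var p => intro _ n j i hj hg; simp only [sz] at hj; interval_cases j <;> simp_all [compileAt]
  | const b => intro _ n j i hj hg; simp only [sz] at hj; interval_cases j <;> simp_all [compileAt]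
  | not e ih =>
      intro hG n j i hj hg
      obtain ⟨p, rfl, hp⟩ := hG
      simp only [compileAt, sz] at hj hg ⊢
      -- compileAt (not (var p)) n = [var p, not n]
      interval_cases j <;> simp_all [compileAt, sz]
  | and e f ihe ihf =>
      intro hG n j i hj hg
      obtain ⟨hGe, hGf⟩ := hG
      have hsze := e.one_le_sz
      have hszf := f.one_le_sz
      simp only [compileAt, sz] at hj hg ⊢
      rcases Nat.lt_or_ge j e.sz with hj1 | hj1
      · rw [List.getD_append _ _ _ _ (by simp [length_compileAt]; omega),
            List.getD_append _ _ _ _ (by rw [length_compileAt]; omega)] at hg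
        obtain ⟨h1, h2, p, h3, h4⟩ := ihe hGe n j i hj1 hg
        refine ⟨h1, by omega, p, ?_, h4⟩
        rwa [List.getD_append _ _ _ _ (by simp [length_compileAt]; omega),
            List.getD_append _ _ _ _ (by rw [length_compileAt]; omega)]
      · rcases Nat.lt_or_ge j (e.sz + f.sz) with hj2 | hj2
        · rw [List.getD_append _ _ _ _ (by simp [length_compileAt]; omega),
              List.getD_append_right _ _ _ _ (by rw [length_compileAt]; omega),
              length_compileAt] at hg
          obtain ⟨h1, h2, p, h3, h4⟩ := ihf hGf (n + e.sz) (j - e.sz) i (by omega) hg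
          refine ⟨by omega, by omega, p, ?_, h4⟩
          rw [List.getD_append _ _ _ _ (by simp [length_compileAt]; omega),
              List.getD_append_right _ _ _ _ (by rw [length_compileAt]; omega), length_compileAt,
              show i - n - e.sz = i - (n + e.sz) by omega]
          exact h3
        · have hje : j = e.sz + f.sz := by omega
          subst hje
          rw [List.getD_append_right _ _ _ _ (by simp [length_compileAt])] at hg
          simp [length_compileAt] at hg
  | or e f ihe ihf =>
      intro hG n j i hj hg
      obtain ⟨hGe, hGf⟩ := hG
      have hsze := e.one_le_sz
      have hszf := f.one_le_sz
      simp only [compileAt, sz] at hj hg ⊢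
      rcases Nat.lt_or_ge j e.sz with hj1 | hj1
      · rw [List.getD_append _ _ _ _ (by simp [length_compileAt]; omega),
            List.getD_append _ _ _ _ (by rw [length_compileAt]; omega)] at hg
        obtain ⟨h1, h2, p, h3, h4⟩ := ihe hGe n j i hj1 hg
        refine ⟨h1, by omega, p, ?_, h4⟩
        rwa [List.getD_append _ _ _ _ (by simp [length_compileAt]; omega),
            List.getD_append _ _ _ _ (by rw [length_compileAt]; omega)]
      · rcases Nat.lt_or_ge j (e.sz + f.sz) with hj2 | hj2
        · rw [List.getD_append _ _ _ _ (by simp [length_compileAt]; omega),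
              List.getD_append_right _ _ _ _ (by rw [length_compileAt]; omega),
              length_compileAt] at hg
          obtain ⟨h1, h2, p, h3, h4⟩ := ihf hGf (n + e.sz) (j - e.sz) i (by omega) hg
          refine ⟨by omega, by omega, p, ?_, h4⟩
          rw [List.getD_append _ _ _ _ (by simp [length_compileAt]; omega),
              List.getD_append_right _ _ _ _ (by rw [length_compileAt]; omega), length_compileAt,
              show i - n - e.sz = i - (n + e.sz) by omega]
          exact h3
        · have hje : j = e.sz + f.sz := by omega
          subst hje
          rw [List.getD_append_right _ _ _ _ (by simp [length_compileAt])] at hg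
          simp [length_compileAt] at hg

def listAnd (L : List (BExpr ι)) : BExpr ι := L.foldr .and (.const true)
def listOr (L : List (BExpr ι)) : BExpr ι := L.foldr .or (.const false)

lemma eval_listAnd (σ : ι → Bool) (L : List (BExpr ι)) :
    (listAnd L).eval σ = true ↔ ∀ c ∈ L, c.eval σ = true := by
  induction L with
  | nil => simp [listAnd, BExpr.eval]
  | cons c L ih => simp [listAnd, BExpr.eval, List.foldr] at ih ⊢; aesop

lemma eval_listOr (σ : ι → Bool) (L : List (BExpr ι)) :
    (listOr L).eval σ = true ↔ ∃ c ∈ L, c.eval σ = true := by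
  induction L with
  | nil => simp [listOr, BExpr.eval]
  | cons c L ih => simp [listOr, BExpr.eval, List.foldr] at ih ⊢; aesop

lemma sz_listAnd (L : List (BExpr ι)) :
    (listAnd L).sz = 1 + (L.map (fun c => c.sz + 1)).sum := by
  induction L with
  | nil => simp [listAnd, BExpr.sz]
  | cons c L ih => simp [listAnd, BExpr.sz, List.foldr] at ih ⊢; omega

lemma sz_listOr (L : List (BExpr ι)) :
    (listOr L).sz = 1 + (L.map (fun c => c.sz + 1)).sum := by
  induction L with
  | nil => simp [listOr, BExpr.sz]
  | cons c L ih => simp [listOr, BExpr.sz, List.foldr] at ih ⊢; omega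

lemma good_listAnd (P : ι → Prop) (L : List (BExpr ι)) (h : ∀ c ∈ L, c.Good P) :
    (listAnd L).Good P := by
  induction L with
  | nil => trivial
  | cons c L ih => exact ⟨h c (by simp), ih fun c hc => h c (by simp [hc])⟩

lemma good_listOr (P : ι → Prop) (L : List (BExpr ι)) (h : ∀ c ∈ L, c.Good P) :
    (listOr L).Good P := by
  induction L with
  | nil => trivial
  | cons c L ih => exact ⟨h c (by simp), ih fun c hc => h c (by simp [hc])⟩

lemma map_sum_le (L : List (BExpr ι)) (B : ℕ) (h : ∀ c ∈ L, c.sz + 1 ≤ B) :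
    (L.map (fun c => c.sz + 1)).sum ≤ L.length * B := by
  induction L with
  | nil => simp
  | cons c L ih =>
      simp only [List.map_cons, List.sum_cons, List.length_cons]
      have := ih fun c hc => h c (by simp [hc])
      have := h c (by simp)
      nlinarith

section Main
variable {V α : Type} [Fintype V] [DecidableEq V]

def labE {K : Type} : HGPLabel α → BExpr (α ⊕ K)
  | .zero => .const false
  | .one => .const true
  | .pos p => .var (.inl p)
  | .neg p => .not (.var (.inl p))

lemma eval_labE {K : Type} (σ : α → Bool) (β : K → Bool) (l : HGPLabel α) :
    (labE (K := K) l).eval (Sum.elim σ β) = l.eval σ := by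
  cases l <;> rfl

def pairClause (E : Finset (Finset V)) (e e' : {e // e ∈ E}) :
    BExpr (α ⊕ {e // e ∈ E}) :=
  if e = e' ∨ Disjoint e.1 e'.1 then .const true
  else .or (.not (.var (.inr e))) (.not (.var (.inr e')))

noncomputable def vtxExpr (lab : V → HGPLabel α) (E : Finset (Finset V)) (v : V) :
    BExpr (α ⊕ {e // e ∈ E}) :=
  .or (labE (lab v))
    (listOr ((E.attach.toList.filter (fun e => v ∈ e.1)).map (fun e => .var (.inr e))))

noncomputable def bigExpr (lab : V → HGPLabel α) (E : Finset (Finset V)) :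
    BExpr (α ⊕ {e // e ∈ E}) :=
  listAnd
    ((E.attach.toList.flatMap (fun e => E.attach.toList.map (fun e' => pairClause E e e'))) ++
     (Finset.univ.toList.map (vtxExpr lab E)))

lemma eval_bigExpr (lab : V → HGPLabel α) (E : Finset (Finset V))
    (σ : α → Bool) (β : {e // e ∈ E} → Bool) :
    (bigExpr lab E).eval (Sum.elim σ β) = true ↔
      (({e : {e // e ∈ E} | β e = true} : Set {e // e ∈ E}).Pairwise
          (fun e e' => Disjoint e.1 e'.1) ∧
        ∀ v : V, (lab v).eval σ = false →
          ∃ e : {e // e ∈ E}, β e = true ∧ v ∈ e.1) := by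
  rw [bigExpr, eval_listAnd]
  constructor
  · intro h
    constructor
    · intro e he e' he' hne
      have hc := h (pairClause E e e') (by
        simp only [List.mem_append, List.mem_flatMap, List.mem_map]
        exact Or.inl ⟨e, by simp, e', by simp, rfl⟩)
      rw [pairClause] at hc
      by_contra hdis
      rw [if_neg (by push_neg; exact ⟨hne, hdis⟩)] at hc
      simp [BExpr.eval] at hc
      simp only [Set.mem_setOf_eq] at he he'
      rcases hc with hc | hc <;> simp_all
    · intro v hv
      have hc := h (vtxExpr lab E v) (by
        simp only [List.mem_append, List.mem_map]
        exact Or.inr ⟨v, by simp, rfl⟩)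
      rw [vtxExpr] at hc
      simp only [BExpr.eval, Bool.or_eq_true, eval_labE, hv, false_or] at hc
      rw [eval_listOr] at hc
      rcases hc with hc | hc
      · simp at hc
      · obtain ⟨c, hcmem, hceval⟩ := hc
        simp only [List.mem_map, List.mem_filter] at hcmem
        obtain ⟨e, ⟨_, hve⟩, rfl⟩ := hcmem
        refine ⟨e, ?_, by simpa using hve⟩
        simpa [BExpr.eval] using hceval

  · rintro ⟨hpw, hcov⟩ c hc
    simp only [List.mem_append, List.mem_flatMap, List.mem_map] at hc
    rcases hc with ⟨e, _, e', _, rfl⟩ | ⟨v, _, rfl⟩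
    · rw [pairClause]
      by_cases hcond : e = e' ∨ Disjoint e.1 e'.1
      · rw [if_pos hcond]; rfl
      · rw [if_neg hcond]
        push_neg at hcond
        simp only [BExpr.eval, Bool.or_eq_true, Bool.not_eq_true']
        by_contra hcontra
        push_neg at hcontra
        obtain ⟨h1, h2⟩ := hcontra
        exact hcond.2 (hpw (by simpa using h1) (by simpa using h2) hcond.1)
    · rw [vtxExpr]
      simp only [BExpr.eval, Bool.or_eq_true, eval_labE]
      rcases hlv : (lab v).eval σ with _ | _
      · obtain ⟨e, hbe, hve⟩ := hcov v hlv
        refine Or.inr ?_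
        rw [eval_listOr]
        exact ⟨.var (.inr e), by
          simp only [List.mem_map, List.mem_filter]
          exact ⟨e, ⟨by simp, by simpa using hve⟩, rfl⟩, by simpa [BExpr.eval] using hbe⟩
      · exact Or.inl rfl

lemma sz_bigExpr (lab : V → HGPLabel α) (E : Finset (Finset V)) :
    (bigExpr lab E).sz ≤ 10 * (E.card + Fintype.card V + 2) ^ 2 := by
  rw [bigExpr, sz_listAnd, List.map_append, List.sum_append]
  have h1 : ∀ c ∈ (E.attach.toList.flatMap fun e =>
      List.map (fun e' => pairClause (α := α) E e e') E.attach.toList), c.sz + 1 ≤ 6 := by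
    intro c hc
    simp only [List.mem_flatMap, List.mem_map] at hc
    obtain ⟨e, _, e', _, rfl⟩ := hc
    rw [pairClause]
    split <;> simp [BExpr.sz]
  have h2 : ∀ c ∈ List.map (vtxExpr lab E) Finset.univ.toList,
      c.sz + 1 ≤ 2 * E.card + 6 := by
    intro c hc
    simp only [List.mem_map] at hc
    obtain ⟨v, _, rfl⟩ := hc
    rw [vtxExpr]
    have hlab : (labE (K := {e // e ∈ E}) (lab v)).sz ≤ 2 := by
      cases lab v <;> simp [labE, BExpr.sz]
    have hlor : (listOr ((E.attach.toList.filter (fun e => v ∈ e.1)).map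
        (fun e => (BExpr.var (Sum.inr e) : BExpr (α ⊕ {e // e ∈ E}))))).sz
        ≤ 1 + 2 * E.card := by
      rw [sz_listOr]
      have hb := map_sum_le ((E.attach.toList.filter (fun e => v ∈ e.1)).map
        (fun e => (BExpr.var (Sum.inr e) : BExpr (α ⊕ {e // e ∈ E})))) 2 (by
          intro c hc
          simp only [List.mem_map] at hc
          obtain ⟨e, _, rfl⟩ := hc
          simp [BExpr.sz])
      have hlen : ((E.attach.toList.filter (fun e => v ∈ e.1)).map
          (fun e => (BExpr.var (Sum.inr e) : BExpr (α ⊕ {e // e ∈ E})))).length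
          ≤ E.card := by
        rw [List.length_map]
        calc _ ≤ E.attach.toList.length := List.length_filter_le _ _
        _ = E.card := by simp
      omega
    simp only [BExpr.sz]
    omega
  have s1 := map_sum_le _ 6 h1
  have s2 := map_sum_le _ (2 * E.card + 6) h2
  have l1 : (E.attach.toList.flatMap fun e =>
      List.map (fun e' => pairClause (α := α) E e e') E.attach.toList).length
      = E.card * E.card := by
    simp [List.length_flatMap]
  have l2 : (List.map (vtxExpr lab E) Finset.univ.toList).length = Fintype.card V := by
    simp
  rw [l1] at s1
  rw [l2] at s2
  nlinarith [s1, s2, sq_nonneg (E.card + Fintype.card V + 2)]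

lemma good_bigExpr (lab : V → HGPLabel α) (E : Finset (Finset V))
    (hmono : ∀ (v : V) (p : α), lab v ≠ HGPLabel.neg p) :
    (bigExpr lab E).Good (fun x => ∃ e : {e // e ∈ E}, x = Sum.inr e) := by
  rw [bigExpr]
  apply good_listAnd
  intro c hc
  simp only [List.mem_append, List.mem_flatMap, List.mem_map] at hc
  rcases hc with ⟨e, _, e', _, rfl⟩ | ⟨v, _, rfl⟩
  · rw [pairClause]
    split
    · trivial
    · exact ⟨⟨_, rfl, e, rfl⟩, ⟨_, rfl, e', rfl⟩⟩
  · rw [vtxExpr]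
    refine ⟨?_, ?_⟩
    · cases hl : lab v with
      | zero => trivial
      | one => trivial
      | pos p => trivial
      | neg p => exact absurd hl (hmono v p)
    · apply good_listOr
      intro c hc
      simp only [List.mem_map] at hc
      obtain ⟨e, _, rfl⟩ := hc
      trivial

end Main
end HGP19


/-- From any hypergraph program `H` (vertices `V` labelled by `lab`, hyperedges
`E`) of size `m = |E|` computing `f`, one obtains a nondeterministic Boolean
circuit `C(x, y)` of size polynomial in `m` (and the number of vertices)
computing `f`: its advice variables `y` correspond to the hyperedges, and
`C(α, β) = 1` iff `{e : β e = 1}` is an independent set of hyperedges covering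
all vertices whose labels evaluate to 0 under `α`; consequently `f α` holds iff
`∃ β, C(α, β) = 1`. If `H` is monotone, negations in `C` are applied only to
advice variables. -/
theorem stmt_19 {V α : Type} [Fintype V] [DecidableEq V]
    (lab : V → HGPLabel α) (E : Finset (Finset V))
    (f : (α → Bool) → Prop)
    (hcomp : ∀ σ : α → Bool,
      f σ ↔ ∃ X ⊆ E, (X : Set (Finset V)).Pairwise Disjoint ∧
        ∀ v : V, (lab v).eval σ = false → ∃ e ∈ X, v ∈ e) :
    ∃ C : BCircuit (α ⊕ {e // e ∈ E}),
      C.m ≤ 10 * (E.card + Fintype.card V + 2) ^ 2 ∧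
      (∀ (σ : α → Bool) (β : {e // e ∈ E} → Bool),
        C.eval (Sum.elim σ β) = true ↔
          (({e : {e // e ∈ E} | β e = true} : Set {e // e ∈ E}).Pairwise
              (fun e e' => Disjoint e.1 e'.1) ∧
            ∀ v : V, (lab v).eval σ = false →
              ∃ e : {e // e ∈ E}, β e = true ∧ v ∈ e.1)) ∧
      (∀ σ : α → Bool, f σ ↔ ∃ β : {e // e ∈ E} → Bool,
        C.eval (Sum.elim σ β) = true) ∧
      ((∀ (v : V) (p : α), lab v ≠ HGPLabel.neg p) →
        ∀ k : ℕ, k < C.m → ∀ i : ℕ, C.gate k = BGate.not i →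
          i < C.m ∧ ∃ e : {e // e ∈ E}, C.gate i = BGate.var (Sum.inr e)) := by
  classical
  refine ⟨(HGP19.bigExpr lab E).toCircuit, ?_, ?_, ?_, ?_⟩
  · exact HGP19.sz_bigExpr lab E
  · intro σ β
    rw [HGP19.BExpr.toCircuit_eval]
    exact HGP19.eval_bigExpr lab E σ β
  · intro σ
    rw [hcomp σ]
    constructor
    · rintro ⟨X, hXE, hpw, hcov⟩
      refine ⟨fun e => decide (e.1 ∈ X), ?_⟩
      rw [HGP19.BExpr.toCircuit_eval, HGP19.eval_bigExpr]
      constructor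
      · intro e he e' he' hne
        simp only [Set.mem_setOf_eq, decide_eq_true_eq] at he he'
        exact hpw he he' (fun h => hne (Subtype.ext h))
      · intro v hv
        obtain ⟨x, hxX, hvx⟩ := hcov v hv
        exact ⟨⟨x, hXE hxX⟩, by simpa using hxX, hvx⟩
    · rintro ⟨β, hβ⟩
      rw [HGP19.BExpr.toCircuit_eval, HGP19.eval_bigExpr] at hβ
      obtain ⟨hpw, hcov⟩ := hβ
      refine ⟨(E.attach.filter (fun e => β e = true)).image (·.1), ?_, ?_, ?_⟩
      · intro x hx
        simp only [Finset.mem_image, Finset.mem_filter] at hx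
        obtain ⟨e, _, rfl⟩ := hx
        exact e.2
      · intro x hx y hy hxy
        simp only [Finset.coe_image, Set.mem_image, Finset.mem_coe,
          Finset.mem_filter] at hx hy
        obtain ⟨e, ⟨_, hbe⟩, rfl⟩ := hx
        obtain ⟨e', ⟨_, hbe'⟩, rfl⟩ := hy
        exact hpw hbe hbe' (fun h => hxy (congrArg _ h))
      · intro v hv
        obtain ⟨e, hbe, hve⟩ := hcov v hv
        exact ⟨e.1, Finset.mem_image.mpr
          ⟨e, Finset.mem_filter.mpr ⟨Finset.mem_attach _ _, hbe⟩, rfl⟩, hve⟩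
  · intro hmono k hk i hgk
    obtain ⟨-, hlt, p, hvar, e, rfl⟩ :=
      HGP19.BExpr.compile_good _ (HGP19.bigExpr lab E)
        (HGP19.good_bigExpr lab E hmono) 0 k i hk hgk
    refine ⟨by simpa [HGP19.BExpr.toCircuit] using hlt, e, ?_⟩
    simpa [HGP19.BExpr.toCircuit] using hvar
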